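/- Let a > 1/2 and μ ≥ 0, and set d = 1/2 − a + √(μ/2 + (a − 1/2)²) and ν = d + a + 1/2. For all t > 0, x > 0, and λ ≥ 0, with p(t,x,y) = (y/t) (y/x)^{a−1/2} exp( −(x²+y²)/(2t) ) I_{ν−1}(xy/t), one has ∫_0^∞ e^{−λ y²} y^d p(t,x,y) dy = x^d (1 + 2λt)^{−ν} exp( −λ x²/(1 + 2λt) ). -/

import Mathlib

open Real MeasureTheory

/-- The modified Bessel function of the first kind,
`I_ν(z) = ∑_{k=0}^∞ (z/2)^{2k+ν} / (k! Γ(k+ν+1))`. -/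
noncomputable def besselI (ν z : ℝ) : ℝ :=
  ∑' k : ℕ, (z / 2) ^ (2 * (k : ℝ) + ν) / ((Nat.factorial k : ℝ) * Real.Gamma ((k : ℝ) + ν + 1))

/-- The generalized Laplace transform identity (3.21) for the fundamental
solution (3.22) of `u_t = (1/2) u_xx + (a/x) u_x - (μ/(4x²)) u` associated with the
Bessel process `dX_t = (a/X_t) dt + dW_t`. -/
theorem stmt_7 (a μ d ν t x lam : ℝ) (ha : 1 / 2 < a) (hμ : 0 ≤ μ)
    (hd : d = 1 / 2 - a + Real.sqrt (μ / 2 + (a - 1 / 2) ^ 2))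
    (hν : ν = d + a + 1 / 2)
    (ht : 0 < t) (hx : 0 < x) (hlam : 0 ≤ lam)
    (p : ℝ → ℝ)
    (hp : ∀ y, p y = (y / t) * (y / x) ^ (a - 1 / 2)
        * Real.exp (-(x ^ 2 + y ^ 2) / (2 * t)) * besselI (ν - 1) (x * y / t)) :
    (∫ y in Set.Ioi (0 : ℝ), Real.exp (-lam * y ^ 2) * y ^ d * p y)
      = x ^ d * (1 + 2 * lam * t) ^ (-ν)
        * Real.exp (-lam * x ^ 2 / (1 + 2 * lam * t)) := by
  have h2t : (0 : ℝ) < 2 * t := by linarith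
  have hd0 : 0 ≤ d := by
    have h1 : a - 1 / 2 ≤ Real.sqrt (μ / 2 + (a - 1 / 2) ^ 2) :=
      le_trans (le_of_eq (Real.sqrt_sq (by linarith : (0:ℝ) ≤ a - 1 / 2)).symm)
        (Real.sqrt_le_sqrt (by linarith))
    rw [hd]; linarith
  have hν1 : 1 < ν := by rw [hν]; linarith
  have hc : (0 : ℝ) < lam + 1 / (2 * t) := by positivity
  set c : ℝ := lam + 1 / (2 * t) with hc_def
  have h2tc : 1 + 2 * lam * t = 2 * t * c := by
    rw [hc_def]; field_simp; ring
  have hA : (0 : ℝ) < 1 + 2 * lam * t := by rw [h2tc]; positivity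
  have hb2 : (0 : ℝ) < x / (2 * t) := by positivity
  have hG : ∀ k : ℕ, 0 < Real.Gamma ((k : ℝ) + ν) := fun k => by
    refine Real.Gamma_pos_of_pos ?_
    have : (0 : ℝ) ≤ (k : ℝ) := Nat.cast_nonneg k
    linarith
  -- the series of nice terms
  set F : ℕ → ℝ → ℝ := fun k y =>
    (x ^ (-(a - 1 / 2)) * Real.exp (-x ^ 2 / (2 * t)) * (1 / t)
        * (x / (2 * t)) ^ (2 * (k : ℝ) + ν - 1)
        / ((Nat.factorial k : ℝ) * Real.Gamma ((k : ℝ) + ν)))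
      * (y ^ (2 * (k : ℝ) + 2 * ν - 1) * Real.exp (-c * y ^ 2)) with hF
  set K : ℝ := x ^ (-(a - 1 / 2)) * Real.exp (-x ^ 2 / (2 * t)) * (1 / (2 * t))
      * (x / (2 * t)) ^ (ν - 1) * c ^ (-ν) with hK
  set r : ℝ := (x / (2 * t)) ^ 2 * c⁻¹ with hr
  -- pointwise expansion of the integrand
  have hpt : ∀ y ∈ Set.Ioi (0 : ℝ),
      Real.exp (-lam * y ^ 2) * y ^ d * p y = ∑' k, F k y := by
    intro y hy
    have hy0 : (0 : ℝ) < y := hy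
    rw [hp y]
    simp only [besselI]
    rw [← tsum_mul_left, ← tsum_mul_left]
    refine tsum_congr fun k => ?_
    have hxy : x * y / t / 2 = (x / (2 * t)) * y := by ring
    rw [hxy, Real.mul_rpow hb2.le hy0.le, Real.div_rpow hy0.le hx.le,
      show (k : ℝ) + (ν - 1) + 1 = (k : ℝ) + ν by ring,
      show 2 * (k : ℝ) + (ν - 1) = 2 * (k : ℝ) + ν - 1 by ring]
    rw [hF]
    simp only []
    rw [Real.rpow_neg hx.le]
    have hyy : y ^ d * y * y ^ (a - 1 / 2) * y ^ (2 * (k : ℝ) + ν - 1)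
        = y ^ (2 * (k : ℝ) + 2 * ν - 1) := by
      rw [show 2 * (k : ℝ) + 2 * ν - 1
            = d + 1 + (a - 1 / 2) + (2 * (k : ℝ) + ν - 1) by rw [hν]; ring,
        Real.rpow_add hy0, Real.rpow_add hy0, Real.rpow_add hy0, Real.rpow_one]
    have hee : Real.exp (-lam * y ^ 2) * Real.exp (-(x ^ 2 + y ^ 2) / (2 * t))
        = Real.exp (-x ^ 2 / (2 * t)) * Real.exp (-c * y ^ 2) := by
      rw [← Real.exp_add, ← Real.exp_add]
      congr 1
      rw [hc_def]; field_simp; ring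
    linear_combination
      ((1 / t) * (x ^ (a - 1 / 2))⁻¹
          * (x / (2 * t)) ^ (2 * (k : ℝ) + ν - 1)
          / ((Nat.factorial k : ℝ) * Real.Gamma ((k : ℝ) + ν))
        * (Real.exp (-lam * y ^ 2) * Real.exp (-(x ^ 2 + y ^ 2) / (2 * t)))) * hyy
      + ((1 / t) * (x ^ (a - 1 / 2))⁻¹
          * (x / (2 * t)) ^ (2 * (k : ℝ) + ν - 1)
          / ((Nat.factorial k : ℝ) * Real.Gamma ((k : ℝ) + ν))
        * y ^ (2 * (k : ℝ) + 2 * ν - 1)) * hee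
  -- each term is integrable
  have hInt : ∀ k : ℕ, IntegrableOn (F k) (Set.Ioi (0 : ℝ)) := by
    intro k
    have hq : (-1 : ℝ) < 2 * (k : ℝ) + 2 * ν - 1 := by
      have : (0 : ℝ) ≤ (k : ℝ) := Nat.cast_nonneg k
      linarith
    exact (integrableOn_rpow_mul_exp_neg_mul_sq hc hq).const_mul _
  -- value of each term's integral
  have hIk : ∀ k : ℕ, (∫ y in Set.Ioi (0 : ℝ), F k y)
      = K * (r ^ k / (Nat.factorial k : ℝ)) := by
    intro k
    have hq : (-1 : ℝ) < 2 * (k : ℝ) + 2 * ν - 1 := by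
      have : (0 : ℝ) ≤ (k : ℝ) := Nat.cast_nonneg k
      linarith
    rw [hF]
    simp only []
    rw [MeasureTheory.integral_const_mul]
    have hgauss : (∫ y in Set.Ioi (0 : ℝ),
        y ^ (2 * (k : ℝ) + 2 * ν - 1) * Real.exp (-c * y ^ 2))
        = c ^ (-((k : ℝ) + ν)) * (1 / 2) * Real.Gamma ((k : ℝ) + ν) := by
      have step : (∫ y in Set.Ioi (0 : ℝ),
          y ^ (2 * (k : ℝ) + 2 * ν - 1) * Real.exp (-c * y ^ 2))
          = ∫ y in Set.Ioi (0 : ℝ),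
            y ^ (2 * (k : ℝ) + 2 * ν - 1) * Real.exp (-c * y ^ (2 : ℝ)) := by
        refine setIntegral_congr_fun measurableSet_Ioi fun y hy => ?_
        rw [show y ^ (2 : ℝ) = y ^ 2 by
          rw [show (2 : ℝ) = ((2 : ℕ) : ℝ) by norm_num, Real.rpow_natCast]]
      rw [step, integral_rpow_mul_exp_neg_mul_rpow (by norm_num : (0:ℝ) < 2) hq hc,
        show -(2 * (k : ℝ) + 2 * ν - 1 + 1) / 2 = -((k : ℝ) + ν) by ring,
        show (2 * (k : ℝ) + 2 * ν - 1 + 1) / 2 = (k : ℝ) + ν by ring]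
    rw [hgauss]
    have h1 : (x / (2 * t)) ^ (2 * (k : ℝ) + ν - 1)
        = ((x / (2 * t)) ^ 2) ^ k * (x / (2 * t)) ^ (ν - 1) := by
      rw [show 2 * (k : ℝ) + ν - 1 = ((2 * k : ℕ) : ℝ) + (ν - 1) by push_cast; ring,
        Real.rpow_add hb2, Real.rpow_natCast, pow_mul]
    have h2 : c ^ (-((k : ℝ) + ν)) = (c ^ k)⁻¹ * c ^ (-ν) := by
      rw [show -((k : ℝ) + ν) = -(k : ℝ) + -ν by ring, Real.rpow_add hc,
        Real.rpow_neg hc.le, Real.rpow_natCast]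
    rw [h1, h2, hK, hr, mul_pow, inv_pow]
    have hGk := hG k
    have hfk : ((Nat.factorial k : ℝ)) ≠ 0 := by positivity
    field_simp
  -- integral of the norm of each term
  have hIknorm : ∀ k : ℕ, (∫ y in Set.Ioi (0 : ℝ), ‖F k y‖)
      = K * (r ^ k / (Nat.factorial k : ℝ)) := by
    intro k
    rw [← hIk k]
    refine setIntegral_congr_fun measurableSet_Ioi fun y hy => ?_
    refine Real.norm_of_nonneg ?_
    have hy0 : (0 : ℝ) < y := hy
    have hGk := hG k
    rw [hF]
    simp only []
    positivity
  have hSum : Summable fun k : ℕ => ∫ y in Set.Ioi (0 : ℝ), ‖F k y‖ := by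
    refine ((Real.summable_pow_div_factorial r).mul_left K).congr fun k => ?_
    rw [hIknorm k]
  -- put it together
  rw [setIntegral_congr_fun measurableSet_Ioi hpt,
    ← MeasureTheory.integral_tsum_of_summable_integral_norm hInt hSum]
  have : ∑' k : ℕ, (∫ y in Set.Ioi (0 : ℝ), F k y)
      = K * Real.exp r := by
    rw [tsum_congr hIk, tsum_mul_left]
    congr 1
    rw [Real.exp_eq_exp_ℝ, NormedSpace.exp_eq_tsum_div]
  rw [this]
  -- final algebra
  have hi : x ^ (-(a - 1 / 2)) * (1 / (2 * t)) * (x / (2 * t)) ^ (ν - 1) * c ^ (-ν)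
      = x ^ d * (1 + 2 * lam * t) ^ (-ν) := by
    rw [show (1 : ℝ) / (2 * t) = (2 * t) ^ (-(1 : ℝ)) by
        rw [Real.rpow_neg_one, one_div]]
    rw [Real.rpow_def_of_pos hx, Real.rpow_def_of_pos hx, Real.rpow_def_of_pos h2t,
      Real.rpow_def_of_pos hb2, Real.rpow_def_of_pos hc, Real.rpow_def_of_pos hA,
      ← Real.exp_add, ← Real.exp_add, ← Real.exp_add, ← Real.exp_add]
    congr 1
    rw [Real.log_div hx.ne' h2t.ne', show Real.log (1 + 2 * lam * t)
        = Real.log (2 * t) + Real.log c by rw [h2tc, Real.log_mul h2t.ne' hc.ne'],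
      hν]
    ring
  have hii : Real.exp (-x ^ 2 / (2 * t)) * Real.exp r
      = Real.exp (-lam * x ^ 2 / (1 + 2 * lam * t)) := by
    rw [← Real.exp_add]
    congr 1
    rw [hr, hc_def]
    have h1 : (1 : ℝ) + 2 * lam * t ≠ 0 := hA.ne'
    field_simp
    ring
  rw [hK]
  linear_combination (Real.exp (-x ^ 2 / (2 * t)) * Real.exp r) * hi
    + (x ^ d * (1 + 2 * lam * t) ^ (-ν)) * hii
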